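/- Let X be a first-countable topological space and let (f_n)_{n∈ℕ} be a sequence of functions from X to the extended reals [−∞,+∞]. Then for every x ∈ X, the infimum over all sequences (xⁿ)_{n∈ℕ} in X converging to x of limsup_{n→∞} f_n(xⁿ) equals the Γ-upper limit Γ-limsup_n f_n(x) = sup_{U} limsup_{n→∞} inf_{y∈U} f_n(y), where U ranges over all neighborhoods of x. -/
import Mathlib


open Filter Topology

/-- For a first-countable topological space `X` and a sequence of
functions `f n : X → EReal`, the infimum over all sequences `u` converging to `x` of
`limsup_n (f n (u n))` equals the Γ-upper limit
`⨆ U ∈ 𝓝 x, limsup_n (⨅ y ∈ U, f n y)`. -/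
theorem gammaSeq_limsup_eq_gammaLimsup {X : Type*} [TopologicalSpace X]
    [FirstCountableTopology X]
    (f : ℕ → X → EReal) (x : X) :
    (⨅ (u : ℕ → X) (_ : Tendsto u atTop (𝓝 x)),
        limsup (fun n => f n (u n)) atTop) =
      ⨆ (U : Set X) (_ : U ∈ 𝓝 x),
        limsup (fun n => ⨅ y ∈ U, f n y) atTop := by
  classical
  set L := ⨆ (U : Set X) (_ : U ∈ 𝓝 x), limsup (fun n => ⨅ y ∈ U, f n y) atTop with hL
  apply le_antisymm
  · rcases eq_or_ne L ⊤ with hT | hT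
    · rw [hT]; exact le_top
    · obtain ⟨c, hc_anti, hc_mem, hc_tendsto⟩ :=
        exists_seq_strictAnti_tendsto' (lt_top_iff_ne_top.mpr hT)
      obtain ⟨B, hB⟩ := (𝓝 x).exists_antitone_basis
      have hBmem : ∀ k, B k ∈ 𝓝 x := fun k => hB.toHasBasis.mem_of_mem trivial
      have hQ : ∀ k, ∀ᶠ n in atTop, ∃ y ∈ B k, f n y < c k := by
        intro k
        have h1 : limsup (fun n => ⨅ y ∈ B k, f n y) atTop < c k :=
          lt_of_le_of_lt (le_iSup₂_of_le (B k) (hBmem k) le_rfl) (hc_mem k).1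
        filter_upwards [Filter.eventually_lt_of_limsup_lt h1] with n hn
        simpa [iInf_lt_iff] using hn
      choose M hM using fun k => Filter.eventually_atTop.mp (hQ k)
      set N : ℕ → ℕ := fun k => (Finset.range (k + 1)).sup M + k with hN
      have hNk : ∀ k, k ≤ N k := fun k => Nat.le_add_left k _
      have hMN : ∀ k, M k ≤ N k := fun k =>
        le_trans (Finset.le_sup (Finset.mem_range.mpr (Nat.lt_succ_self k)))
          (Nat.le_add_right _ _)
      set g : ℕ → ℕ := fun n => Nat.findGreatest (fun k => N k ≤ n) n with hg
      have hg_ge : ∀ k n, N k ≤ n → k ≤ g n := fun k n h =>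
        Nat.le_findGreatest (le_trans (hNk k) h) h
      set u : ℕ → X := fun n =>
        if h : ∃ y ∈ B (g n), f n y < c (g n) then h.choose else x with hu
      have key : ∀ k, ∀ᶠ n in atTop, u n ∈ B k ∧ f n (u n) < c k := by
        intro k
        filter_upwards [Filter.eventually_ge_atTop (N (k + 1))] with n hn
        have hgk : k + 1 ≤ g n := hg_ge (k + 1) n hn
        have hPg : N (g n) ≤ n :=
          Nat.findGreatest_spec (P := fun k => N k ≤ n) (le_trans (hNk (k + 1)) hn) hn
        have hQn : ∃ y ∈ B (g n), f n y < c (g n) := hM (g n) n (le_trans (hMN _) hPg)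
        have hun : u n = hQn.choose := by simp only [hu]; exact dif_pos hQn
        obtain ⟨hy1, hy2⟩ := hQn.choose_spec
        have hkg : k ≤ g n := le_trans (Nat.le_succ k) hgk
        refine ⟨?_, ?_⟩
        · rw [hun]; exact hB.antitone hkg hy1
        · rw [hun]; exact lt_of_lt_of_le hy2 (hc_anti.antitone hkg)
      have hu_tendsto : Tendsto u atTop (𝓝 x) := by
        rw [hB.toHasBasis.tendsto_right_iff]
        exact fun k _ => (key k).mono fun n hn => hn.1
      have hlim : limsup (fun n => f n (u n)) atTop ≤ L := by
        have h1 : limsup (fun n => f n (u n)) atTop ≤ ⨅ k, c k :=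
          le_iInf fun k => Filter.limsup_le_of_le (by isBoundedDefault)
            ((key k).mono fun n hn => le_of_lt hn.2)
        have h2 : (⨅ k, c k) = L :=
          tendsto_nhds_unique (tendsto_atTop_iInf hc_anti.antitone) hc_tendsto
        rwa [h2] at h1
      exact iInf₂_le_of_le u hu_tendsto hlim
  · refine le_iInf₂ fun u hu => iSup₂_le fun U hU => ?_
    have h : ∀ᶠ n in atTop, (⨅ y ∈ U, f n y) ≤ f n (u n) := by
      filter_upwards [hu hU] with n hn
      exact iInf₂_le (u n) hn
    exact limsup_le_limsup h
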